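/- Let Y ∈ ℝ^{d×m} have SVD Y = UΣVᵀ with singular values σ₁,…,σ_r, and define the adaptive dictionary atoms D_j = u_j v_jᵀ. For λ ≥ 0, let α̂ minimize α ↦ (1/2)‖Y − Σⱼ αⱼ D_j‖_F² + λ‖α‖₁ over α ∈ ℝ^r with α ≥ 0 entrywise, and let X̂ minimize X ↦ (1/2)‖Y − X‖_F² + λ‖X‖_* over ℝ^{d×m}. Then Σⱼ α̂ⱼ D_j = X̂, i.e., group-based ℓ₁ sparse coding under the adaptive dictionary is equivalent to nuclear norm minimization. -/

import Mathlib

open Matrix Finset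

/-- Nuclear norm: trace of the positive semidefinite square root of `XᵀX`. -/
noncomputable def nuclearNorm {d m : ℕ} (X : Matrix (Fin d) (Fin m) ℝ) : ℝ :=
  ((Matrix.posSemidef_conjTranspose_mul_self X).1.eigenvectorUnitary.1 *
      Matrix.diagonal (Real.sqrt ∘ (Matrix.posSemidef_conjTranspose_mul_self X).1.eigenvalues) *
      (star (Matrix.posSemidef_conjTranspose_mul_self X).1.eigenvectorUnitary :
        Matrix (Fin m) (Fin m) ℝ)).trace

open scoped MatrixOrder

lemma nuclearNorm_eq_sqrt {d m : ℕ} (X : Matrix (Fin d) (Fin m) ℝ) :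
    nuclearNorm X = (CFC.sqrt (Xᴴ * X)).trace := by
  have hA := Matrix.posSemidef_conjTranspose_mul_self X
  rw [nuclearNorm, CFC.sqrt_eq_cfc, cfc_nnreal_eq_real _ (Xᴴ * X), hA.1.cfc_eq]
  simp only [IsHermitian.cfc, Unitary.conjStarAlgAut_apply]
  congr 2
  ext i j
  simp [Matrix.diagonal_apply, Real.coe_toNNReal _ (Real.sqrt_nonneg _)]
  left
  exact congrArg Real.sqrt (max_eq_left (hA.eigenvalues_nonneg j)).symm

lemma sandwich {p q s r : ℕ} (A : Matrix (Fin p) (Fin r) ℝ) (B : Matrix (Fin r) (Fin q) ℝ)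
    (V : Matrix (Fin s) (Fin r) ℝ) (hV : Vᵀ * V = 1) :
    (A * Vᵀ) * (V * B) = A * B := by
  rw [Matrix.mul_assoc, ← Matrix.mul_assoc Vᵀ, hV, Matrix.one_mul]

lemma UDV_mul {d m r : ℕ} (U : Matrix (Fin d) (Fin r) ℝ) (V : Matrix (Fin m) (Fin r) ℝ)
    (hU : Uᵀ * U = 1) (a b : Fin r → ℝ) :
    (U * Matrix.diagonal a * Vᵀ)ᵀ * (U * Matrix.diagonal b * Vᵀ)
      = V * Matrix.diagonal (fun j => a j * b j) * Vᵀ := by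
  have h1 : (U * Matrix.diagonal a * Vᵀ)ᵀ = (V * Matrix.diagonal a) * Uᵀ := by
    rw [Matrix.transpose_mul, Matrix.transpose_mul, Matrix.transpose_transpose,
      Matrix.diagonal_transpose, Matrix.mul_assoc]
  rw [h1, show U * Matrix.diagonal b * Vᵀ = U * (Matrix.diagonal b * Vᵀ) from Matrix.mul_assoc ..]
  rw [show (V * Matrix.diagonal a) * Uᵀ = ((V * Matrix.diagonal a) * Uᵀ) from rfl]
  rw [sandwich (V * Matrix.diagonal a) (Matrix.diagonal b * Vᵀ) U hU]
  rw [Matrix.mul_assoc, ← Matrix.mul_assoc (Matrix.diagonal a), Matrix.diagonal_mul_diagonal,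
    ← Matrix.mul_assoc]

lemma trace_VDV {m r : ℕ} (V : Matrix (Fin m) (Fin r) ℝ) (hV : Vᵀ * V = 1) (c : Fin r → ℝ) :
    (V * Matrix.diagonal c * Vᵀ).trace = ∑ j, c j := by
  rw [Matrix.trace_mul_comm, ← Matrix.mul_assoc, hV, Matrix.one_mul, Matrix.trace_diagonal]

lemma psd_VDV {m r : ℕ} (V : Matrix (Fin m) (Fin r) ℝ) (c : Fin r → ℝ) (hc : ∀ j, 0 ≤ c j) :
    (V * Matrix.diagonal c * Vᵀ).PosSemidef := by
  have h := (Matrix.posSemidef_diagonal_iff.mpr hc).mul_mul_conjTranspose_same V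
  simpa [Matrix.conjTranspose_eq_transpose_of_trivial] using h

lemma nuclearNorm_UDV {d m r : ℕ} (U : Matrix (Fin d) (Fin r) ℝ) (V : Matrix (Fin m) (Fin r) ℝ)
    (hU : Uᵀ * U = 1) (hV : Vᵀ * V = 1) (c : Fin r → ℝ) (hc : ∀ j, 0 ≤ c j) :
    nuclearNorm (U * Matrix.diagonal c * Vᵀ) = ∑ j, c j := by
  set M := U * Matrix.diagonal c * Vᵀ with hM
  have hMM : Mᵀ * M = V * Matrix.diagonal (fun j => c j * c j) * Vᵀ := UDV_mul U V hU c c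
  have hR : (V * Matrix.diagonal c * Vᵀ).PosSemidef := psd_VDV V c hc
  have hsq : (V * Matrix.diagonal c * Vᵀ) ^ 2 = Mᵀ * M := by
    rw [pow_two, hMM]
    have h1 : (V * Matrix.diagonal c * Vᵀ)ᵀ = V * Matrix.diagonal c * Vᵀ := by
      rw [Matrix.transpose_mul, Matrix.transpose_mul, Matrix.transpose_transpose,
        Matrix.diagonal_transpose, Matrix.mul_assoc]
    nth_rewrite 1 [← h1]
    exact UDV_mul V V hV c c
  have := CFC.sqrt_unique (a := Mᴴ * M) (b := V * Matrix.diagonal c * Vᵀ)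
    (by rw [← pow_two]; exact hsq) hR.nonneg
  rw [nuclearNorm_eq_sqrt, this, trace_VDV V hV c]

lemma trace_sq {d m : ℕ} (M : Matrix (Fin d) (Fin m) ℝ) :
    (Mᵀ * M).trace = ∑ j, ∑ i, (M i j)^2 := by
  simp [Matrix.trace, Matrix.diag, Matrix.mul_apply, sq]

lemma eq_of_trace_sq_le {d m : ℕ} (M : Matrix (Fin d) (Fin m) ℝ)
    (h : (Mᵀ * M).trace ≤ 0) : M = 0 := by
  rw [trace_sq] at h
  ext i j
  have h2 : ∀ j ∈ Finset.univ (α := Fin m), (0:ℝ) ≤ ∑ i, (M i j)^2 :=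
    fun j _ => Finset.sum_nonneg fun i _ => sq_nonneg _
  have h3 := (Finset.sum_eq_zero_iff_of_nonneg h2).mp (le_antisymm h (Finset.sum_nonneg h2))
  have h4 := (Finset.sum_eq_zero_iff_of_nonneg (fun i _ => sq_nonneg (M i j))).mp (h3 j (Finset.mem_univ j))
  have := h4 i (Finset.mem_univ i)
  simpa using pow_eq_zero_iff (n:=2) (by norm_num) |>.mp this

lemma trace_mul_entries {d m : ℕ} (M N : Matrix (Fin d) (Fin m) ℝ) :
    (Mᵀ * N).trace = ∑ j, ∑ i, M i j * N i j := by
  simp [Matrix.trace, Matrix.diag, Matrix.mul_apply]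

lemma psd_diag_nonneg {n : ℕ} {A : Matrix (Fin n) (Fin n) ℝ} (hA : A.PosSemidef) (j : Fin n) :
    0 ≤ A j j := by
  exact hA.diag_nonneg

lemma trace_le_nuclearNorm {d m : ℕ} (W X : Matrix (Fin d) (Fin m) ℝ)
    (hW : ((1 : Matrix (Fin m) (Fin m) ℝ) - Wᵀ * W).PosSemidef) :
    (Wᵀ * X).trace ≤ nuclearNorm X := by
  have hA := Matrix.posSemidef_conjTranspose_mul_self X
  set S := CFC.sqrt (Xᴴ * X) with hSdef
  have hS : S.PosSemidef := (CFC.sqrt_nonneg _).posSemidef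
  have hHerm : S.IsHermitian := hS.1
  set Q : Matrix (Fin m) (Fin m) ℝ :=
    (Matrix.IsHermitian.eigenvectorUnitary hHerm : Matrix (Fin m) (Fin m) ℝ) with hQdef
  set μ := hHerm.eigenvalues with hμdef
  have hQ1 : Qᵀ * Q = 1 := by
    have := Matrix.mem_unitaryGroup_iff'.mp (Matrix.IsHermitian.eigenvectorUnitary hHerm).2
    simpa [Matrix.star_eq_conjTranspose, Matrix.conjTranspose_eq_transpose_of_trivial] using this
  have hQ2 : Q * Qᵀ = 1 := by
    have := Matrix.mem_unitaryGroup_iff.mp (Matrix.IsHermitian.eigenvectorUnitary hHerm).2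
    simpa [Matrix.star_eq_conjTranspose, Matrix.conjTranspose_eq_transpose_of_trivial] using this
  have hspec : S = Q * Matrix.diagonal μ * Qᵀ := by
    have h := hHerm.spectral_theorem
    simpa [Matrix.star_eq_conjTranspose, Matrix.conjTranspose_eq_transpose_of_trivial] using h
  have hμ : ∀ j, 0 ≤ μ j := hS.eigenvalues_nonneg
  have htrS : S.trace = ∑ j, μ j := by rw [hspec]; exact trace_VDV Q hQ1 μ
  have hQSQ : Qᵀ * S * Q = Matrix.diagonal μ := by
    rw [hspec, Matrix.mul_assoc, Matrix.mul_assoc, hQ1, Matrix.mul_one, ← Matrix.mul_assoc, hQ1,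
      Matrix.one_mul]
  have hQAQ : Qᵀ * (Xᵀ * X) * Q = Matrix.diagonal (fun j => μ j * μ j) := by
    have hXA : Xᵀ * X = S * S := (CFC.sqrt_mul_sqrt_self _ hA.nonneg).symm
    calc Qᵀ * (Xᵀ * X) * Q = (Qᵀ * S * Q) * (Qᵀ * S * Q) := by
          rw [hXA]
          rw [show Qᵀ * S * Q * (Qᵀ * S * Q) = Qᵀ * S * ((Q * Qᵀ) * (S * Q)) by
            simp only [Matrix.mul_assoc], hQ2, Matrix.one_mul]
          simp only [Matrix.mul_assoc]
      _ = Matrix.diagonal (fun j => μ j * μ j) := by rw [hQSQ, Matrix.diagonal_mul_diagonal]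
  -- reduce trace
  have hkey : (Wᵀ * X).trace = ((W * Q)ᵀ * (X * Q)).trace := by
    have h : (W * Q)ᵀ * (X * Q) = Qᵀ * (Wᵀ * X) * Q := by
      rw [Matrix.transpose_mul]; simp only [Matrix.mul_assoc]
    conv_rhs => rw [h, Matrix.trace_mul_comm]
    rw [← Matrix.mul_assoc, hQ2, Matrix.one_mul]
  set B := W * Q
  set C := X * Q
  have hCC : Bᵀ * B = 1 - Qᵀ * (1 - Wᵀ * W) * Q := by
    have : Bᵀ * B = Qᵀ * (Wᵀ * W) * Q := by
      rw [Matrix.transpose_mul]; simp only [Matrix.mul_assoc]; rfl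
    rw [this, Matrix.mul_sub, Matrix.sub_mul, Matrix.mul_one, hQ1]
    abel
  have hpsdQ : (Qᵀ * (1 - Wᵀ * W) * Q).PosSemidef := by
    have := hW.conjTranspose_mul_mul_same Q
    simpa [Matrix.conjTranspose_eq_transpose_of_trivial] using this
  have hBle : ∀ j, ∑ i, (B i j)^2 ≤ 1 := by
    intro j
    have h1 : (Bᵀ * B) j j = ∑ i, (B i j)^2 := by
      simp [Matrix.mul_apply, sq]
    have h2 := psd_diag_nonneg hpsdQ j
    have h3 : ∑ i, (B i j)^2 = 1 - (Qᵀ * ((1:Matrix (Fin m) (Fin m) ℝ) - Wᵀ * W) * Q) j j := by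
      rw [← h1, hCC, Matrix.sub_apply, Matrix.one_apply_eq]
    linarith
  have hCval : ∀ j, ∑ i, (C i j)^2 = μ j * μ j := by
    intro j
    have h1 : (Cᵀ * C) j j = ∑ i, (C i j)^2 := by simp [Matrix.mul_apply, sq]
    have h2 : Cᵀ * C = Matrix.diagonal (fun j => μ j * μ j) := by
      rw [← hQAQ, Matrix.transpose_mul]; simp only [Matrix.mul_assoc]; rfl
    rw [h2] at h1
    simpa using h1.symm
  have hnn : nuclearNorm X = ∑ j, μ j := by rw [nuclearNorm_eq_sqrt]; exact htrS
  rw [hkey, trace_mul_entries, hnn]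
  apply Finset.sum_le_sum
  intro j _
  have hcs := Finset.sum_mul_sq_le_sq_mul_sq Finset.univ (fun i => B i j) (fun i => C i j)
  have h1 := hBle j
  have h2 := hCval j
  have h3 : (0:ℝ) ≤ ∑ i, (C i j)^2 := Finset.sum_nonneg fun i _ => sq_nonneg _
  nlinarith [hμ j, Finset.sum_nonneg (fun i (_ : i ∈ Finset.univ) => sq_nonneg (B i j))]

lemma scalar_soft (s l a : ℝ) (hs : 0 ≤ s) (hl : 0 ≤ l) (ha : 0 ≤ a) :
    (1/2)*(s - (s - min s l))^2 + l*(s - min s l) + (1/2)*(a - (s - min s l))^2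
      ≤ (1/2)*(s - a)^2 + l*a := by
  rcases le_total s l with h | h
  · rw [min_eq_left h]; nlinarith
  · rw [min_eq_right h]; nlinarith

lemma sum_smul_D {d m r : ℕ} (U : Matrix (Fin d) (Fin r) ℝ) (V : Matrix (Fin m) (Fin r) ℝ)
    (c : Fin r → ℝ) :
    (∑ j, c j • Matrix.vecMulVec (fun i => U i j) (fun l => V l j))
      = U * Matrix.diagonal c * Vᵀ := by
  ext i l
  rw [Matrix.sum_apply, Matrix.mul_assoc]
  simp only [Matrix.mul_apply, Matrix.diagonal_mul, Matrix.transpose_apply,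
    Matrix.vecMulVec_apply, Matrix.smul_apply, smul_eq_mul]
  refine Finset.sum_congr rfl fun j _ => ?_
  rw [Finset.mul_sum]
  rw [Finset.sum_eq_single j (fun b _ hb => by simp [Matrix.diagonal_apply_ne c (Ne.symm hb)])
    (by simp)]
  rw [Matrix.diagonal_apply_eq]; ring

lemma trace_expand {d m : ℕ} (G Δ : Matrix (Fin d) (Fin m) ℝ) :
    ((G - Δ)ᵀ * (G - Δ)).trace = (Gᵀ*G).trace - 2*(Gᵀ*Δ).trace + (Δᵀ*Δ).trace := by
  have h : (Δᵀ * G).trace = (Gᵀ * Δ).trace := by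
    rw [← Matrix.trace_transpose (Δᵀ * G), Matrix.transpose_mul, Matrix.transpose_transpose]
  rw [Matrix.transpose_sub, Matrix.sub_mul, Matrix.mul_sub, Matrix.mul_sub,
    Matrix.trace_sub, Matrix.trace_sub, Matrix.trace_sub, h]
  ring

/-- Group-based ℓ₁ sparse coding under the adaptive SVD dictionary is equivalent to
nuclear norm minimization: the synthesized minimizer coincides with the nuclear-norm
minimizer. -/
theorem sparse_coding_eq_nuclear_norm_min (d m r : ℕ)
    (Y : Matrix (Fin d) (Fin m) ℝ)
    (U : Matrix (Fin d) (Fin r) ℝ) (V : Matrix (Fin m) (Fin r) ℝ)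
    (hU : Uᵀ * U = 1) (hV : Vᵀ * V = 1)
    (σ : Fin r → ℝ) (hσ : ∀ i, 0 ≤ σ i)
    (hY : Y = U * Matrix.diagonal σ * Vᵀ)
    (D : Fin r → Matrix (Fin d) (Fin m) ℝ)
    (hD : ∀ j, D j = Matrix.vecMulVec (fun i => U i j) (fun l => V l j))
    (lam : ℝ) (hlam : 0 ≤ lam)
    (αhat : Fin r → ℝ) (hαhat_nonneg : ∀ j, 0 ≤ αhat j)
    (hαhat : ∀ α : Fin r → ℝ, (∀ j, 0 ≤ α j) →
      (1/2) * ((Y - ∑ j, αhat j • D j)ᵀ * (Y - ∑ j, αhat j • D j)).trace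
        + lam * ∑ j, |αhat j| ≤
      (1/2) * ((Y - ∑ j, α j • D j)ᵀ * (Y - ∑ j, α j • D j)).trace
        + lam * ∑ j, |α j|)
    (Xhat : Matrix (Fin d) (Fin m) ℝ)
    (hXhat : ∀ X : Matrix (Fin d) (Fin m) ℝ,
      (1/2) * ((Y - Xhat)ᵀ * (Y - Xhat)).trace + lam * nuclearNorm Xhat ≤
      (1/2) * ((Y - X)ᵀ * (Y - X)).trace + lam * nuclearNorm X) :
    (∑ j, αhat j • D j) = Xhat := by
  classical
  set τ : Fin r → ℝ := fun j => σ j - min (σ j) lam with hτdef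
  have hτ : ∀ j, 0 ≤ τ j := fun j => by
    simp only [hτdef, sub_nonneg]; exact min_le_left _ _
  set Xstar : Matrix (Fin d) (Fin m) ℝ := U * Matrix.diagonal τ * Vᵀ with hXs
  -- synthesis identity
  have hsum : ∀ c : Fin r → ℝ, (∑ j, c j • D j) = U * Matrix.diagonal c * Vᵀ := by
    intro c
    simp only [hD]
    exact sum_smul_D U V c
  -- residual identity
  have hdiff : ∀ e : Fin r → ℝ,
      Y - U * Matrix.diagonal e * Vᵀ = U * Matrix.diagonal (fun j => σ j - e j) * Vᵀ := by
    intro e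
    rw [hY, ← Matrix.sub_mul, ← Matrix.mul_sub, Matrix.diagonal_sub]
  have hfro : ∀ e : Fin r → ℝ,
      ((U * Matrix.diagonal e * Vᵀ)ᵀ * (U * Matrix.diagonal e * Vᵀ)).trace = ∑ j, (e j)^2 := by
    intro e
    rw [UDV_mul U V hU e e, trace_VDV V hV]
    simp [sq]
  -- Part 1 : αhat = τ
  have hobj : ∀ c : Fin r → ℝ,
      ((Y - ∑ j, c j • D j)ᵀ * (Y - ∑ j, c j • D j)).trace = ∑ j, (σ j - c j)^2 := by
    intro c
    rw [hsum c, hdiff c, hfro]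
  have hineq := hαhat τ hτ
  rw [hobj αhat, hobj τ] at hineq
  have habs1 : ∀ j, |αhat j| = αhat j := fun j => abs_of_nonneg (hαhat_nonneg j)
  have habs2 : ∀ j, |τ j| = τ j := fun j => abs_of_nonneg (hτ j)
  simp only [habs1, habs2] at hineq
  have hscal : ∀ j, (1/2)*(σ j - τ j)^2 + lam*(τ j) + (1/2)*(αhat j - τ j)^2
      ≤ (1/2)*(σ j - αhat j)^2 + lam*(αhat j) := by
    intro j
    exact scalar_soft (σ j) lam (αhat j) (hσ j) hlam (hαhat_nonneg j)
  have hsumscal := Finset.sum_le_sum (fun j (_ : j ∈ Finset.univ) => hscal j)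
  simp only [Finset.sum_add_distrib, ← Finset.mul_sum] at hsumscal
  have hsq0 : ∑ j, (αhat j - τ j)^2 ≤ 0 := by linarith
  have hαeq : αhat = τ := by
    funext j
    have h := (Finset.sum_eq_zero_iff_of_nonneg (fun j (_ : j ∈ Finset.univ) => sq_nonneg (αhat j - τ j))).mp
      (le_antisymm hsq0 (Finset.sum_nonneg fun j _ => sq_nonneg _)) j (Finset.mem_univ j)
    have := pow_eq_zero_iff (n := 2) (by norm_num) |>.mp h
    linarith [sub_eq_zero.mp this]
  -- Part 2 : Xhat = Xstar
  set G : Matrix (Fin d) (Fin m) ℝ := U * Matrix.diagonal (fun j => min (σ j) lam) * Vᵀ with hGdef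
  have hG1 : Y - Xstar = G := by
    rw [hXs, hdiff τ, hGdef]
    have h : (fun j => σ j - τ j) = fun j => min (σ j) lam := by
      funext j; simp [hτdef]
    rw [h]
  have hGXstar : (Gᵀ * Xstar).trace = lam * ∑ j, τ j := by
    rw [hXs, hGdef, UDV_mul U V hU, trace_VDV V hV, Finset.mul_sum]
    refine Finset.sum_congr rfl fun j _ => ?_
    rcases le_total (σ j) lam with h | h
    · simp [hτdef, min_eq_left h]
    · simp [hτdef, min_eq_right h]
  have hnnXstar : nuclearNorm Xstar = ∑ j, τ j := nuclearNorm_UDV U V hU hV τ hτ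
  -- the dual bound
  have hGX : ∀ X : Matrix (Fin d) (Fin m) ℝ, (Gᵀ * X).trace ≤ lam * nuclearNorm X := by
    intro X
    rcases eq_or_lt_of_le hlam with h0 | hpos
    · have hG0 : G = 0 := by
        rw [hGdef]
        have : (fun j => min (σ j) lam) = fun _ => (0:ℝ) := by
          funext j; rw [← h0]; exact min_eq_right (hσ j)
        rw [this]
        simp
      rw [hG0, ← h0]
      simp
    · set b : Fin r → ℝ := fun j => min (σ j) lam / lam with hbdef
      have hb0 : ∀ j, 0 ≤ b j := fun j => div_nonneg (le_min (hσ j) hlam) hlam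
      have hb1 : ∀ j, b j ≤ 1 := fun j => (div_le_one hpos).mpr (min_le_right _ _)
      set W : Matrix (Fin d) (Fin m) ℝ := U * Matrix.diagonal b * Vᵀ with hWdef
      have hdiagb : Matrix.diagonal (fun j => min (σ j) lam) = lam • Matrix.diagonal b := by
        ext i j
        rcases eq_or_ne i j with h | h
        · subst h
          simp only [Matrix.diagonal_apply_eq, Matrix.smul_apply, smul_eq_mul, hbdef]
          field_simp
        · simp [Matrix.diagonal_apply_ne _ h]
      have hGW : G = lam • W := by
        rw [hGdef, hWdef, hdiagb, Matrix.mul_smul, Matrix.smul_mul]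
      have hWW : Wᵀ * W = V * Matrix.diagonal (fun j => b j * b j) * Vᵀ := UDV_mul U V hU b b
      have hP : (V * Vᵀ) * (V * Vᵀ) = V * Vᵀ := sandwich V Vᵀ V hV
      have hpsd1 : ((1 : Matrix (Fin m) (Fin m) ℝ) - V * Vᵀ).PosSemidef := by
        have hsym : (1 - V * Vᵀ)ᵀ = 1 - V * Vᵀ := by
          rw [Matrix.transpose_sub, Matrix.transpose_one, Matrix.transpose_mul,
            Matrix.transpose_transpose]
        have hidem : (1 - V * Vᵀ)ᵀ * (1 - V * Vᵀ) = 1 - V * Vᵀ := by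
          rw [hsym]
          simp only [Matrix.sub_mul, Matrix.mul_sub, Matrix.one_mul, Matrix.mul_one, hP]
          abel
        have h := Matrix.posSemidef_conjTranspose_mul_self
          ((1 : Matrix (Fin m) (Fin m) ℝ) - V * Vᵀ)
        rw [Matrix.conjTranspose_eq_transpose_of_trivial, hidem] at h
        exact h
      have hpsd2 : (V * Matrix.diagonal (fun j => 1 - b j * b j) * Vᵀ).PosSemidef :=
        psd_VDV V _ (fun j => by nlinarith [hb0 j, hb1 j])
      have hsplit : (1 : Matrix (Fin m) (Fin m) ℝ) - Wᵀ * W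
          = ((1 : Matrix (Fin m) (Fin m) ℝ) - V * Vᵀ)
            + V * Matrix.diagonal (fun j => 1 - b j * b j) * Vᵀ := by
        rw [hWW]
        have h : Matrix.diagonal (fun j => 1 - b j * b j)
            = (1 : Matrix (Fin r) (Fin r) ℝ) - Matrix.diagonal (fun j => b j * b j) := by
          rw [← Matrix.diagonal_one, ← Matrix.diagonal_sub]
        rw [h]
        simp only [Matrix.mul_sub, Matrix.sub_mul, Matrix.mul_one, Matrix.one_mul]
        abel
      have hpsd : ((1 : Matrix (Fin m) (Fin m) ℝ) - Wᵀ * W).PosSemidef := by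
        rw [hsplit]
        exact hpsd1.add hpsd2
      have hvn := trace_le_nuclearNorm W X hpsd
      have htr : (Gᵀ * X).trace = lam * (Wᵀ * X).trace := by
        rw [hGW, Matrix.transpose_smul, Matrix.smul_mul, Matrix.trace_smul, smul_eq_mul]
      rw [htr]
      exact mul_le_mul_of_nonneg_left hvn (le_of_lt hpos)
  -- assemble
  have hE1 : ((Y - Xhat)ᵀ * (Y - Xhat)).trace
      = (Gᵀ*G).trace - 2*(Gᵀ*Xhat).trace + 2*(lam * ∑ j, τ j)
        + ((Xhat - Xstar)ᵀ*(Xhat - Xstar)).trace := by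
    have h : Y - Xhat = G - (Xhat - Xstar) := by rw [← hG1]; abel
    rw [h, trace_expand]
    have h2 : (Gᵀ * (Xhat - Xstar)).trace = (Gᵀ*Xhat).trace - lam * ∑ j, τ j := by
      rw [Matrix.mul_sub, Matrix.trace_sub, hGXstar]
    rw [h2]; ring
  have hE2 : ((Y - Xstar)ᵀ * (Y - Xstar)).trace = (Gᵀ*G).trace := by rw [hG1]
  have hE3 := hXhat Xstar
  rw [hE2, hnnXstar, hE1] at hE3
  have hE4 := hGX Xhat
  have hΔ : ((Xhat - Xstar)ᵀ*(Xhat - Xstar)).trace ≤ 0 := by linarith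
  have hz : Xhat - Xstar = 0 := eq_of_trace_sq_le _ hΔ
  have hXeq : Xhat = Xstar := by rwa [sub_eq_zero] at hz
  rw [hαeq, hsum τ, hXeq]
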